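/- Let I be a finite set, H a real Hilbert space, 𝓗 = ⊕_{i∈I} H, and for each i ∈ I let ω_{i,j} ≥ 0 for j ∈ I∖{i} satisfy: for every i, ∑_{j≠i} ω_{i,j} ≤ 1, and for every j, ∑_{i≠j} ω_{i,j} ≤ 1. Then the operator G : 𝓗 → 𝓗 with i-th component G_i(x) = x_i − ∑_{j≠i} ω_{i,j} x_j is monotone, i.e., ∑_{i∈I} ⟨x_i − y_i, (x_i − y_i) − ∑_{j≠i} ω_{i,j}(x_j − y_j)⟩ ≥ 0 for all x, y ∈ 𝓗. -/

import Mathlib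

open scoped RealInnerProductSpace

theorem stmt5 {I : Type*} [Fintype I] [Nonempty I] [DecidableEq I]
    {H : Type*} [NormedAddCommGroup H] [InnerProductSpace ℝ H]
    (ω : I → I → ℝ) (hω : ∀ i j, 0 ≤ ω i j)
    (hrow : ∀ i, ∑ j ∈ Finset.univ.erase i, ω i j ≤ 1)
    (hcol : ∀ j, ∑ i ∈ Finset.univ.erase j, ω i j ≤ 1) :
    ∀ x y : I → H,
      0 ≤ ∑ i, ⟪x i - y i, (x i - y i) - ∑ j ∈ Finset.univ.erase i, ω i j • (x j - y j)⟫ := by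
  intro x y
  set z : I → H := fun i => x i - y i with hz
  have hsum : ∑ i, ⟪z i, z i - ∑ j ∈ Finset.univ.erase i, ω i j • z j⟫
      = ∑ i, ‖z i‖ ^ 2 - ∑ i, ∑ j ∈ Finset.univ.erase i, ω i j * ⟪z i, z j⟫ := by
    rw [← Finset.sum_sub_distrib]
    refine Finset.sum_congr rfl fun i _ => ?_
    rw [inner_sub_right, real_inner_self_eq_norm_sq, inner_sum]
    simp [real_inner_smul_right]
  rw [hsum]
  have hb : ∀ i j, ω i j * ⟪z i, z j⟫ ≤ ω i j * ((‖z i‖ ^ 2 + ‖z j‖ ^ 2) / 2) := by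
    intro i j
    refine mul_le_mul_of_nonneg_left ?_ (hω i j)
    refine le_trans (real_inner_le_norm _ _) ?_
    nlinarith [sq_nonneg (‖z i‖ - ‖z j‖)]
  have h1 : ∑ i, ∑ j ∈ Finset.univ.erase i, ω i j * ⟪z i, z j⟫
      ≤ ∑ i, ∑ j ∈ Finset.univ.erase i, ω i j * ((‖z i‖ ^ 2 + ‖z j‖ ^ 2) / 2) := by
    exact Finset.sum_le_sum fun i _ => Finset.sum_le_sum fun j _ => hb i j
  have hsplit : ∑ i, ∑ j ∈ Finset.univ.erase i, ω i j * ((‖z i‖ ^ 2 + ‖z j‖ ^ 2) / 2)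
      = (∑ i, ∑ j ∈ Finset.univ.erase i, ω i j * ‖z i‖ ^ 2) / 2
        + (∑ i, ∑ j ∈ Finset.univ.erase i, ω i j * ‖z j‖ ^ 2) / 2 := by
    rw [Finset.sum_div, Finset.sum_div, ← Finset.sum_add_distrib]
    refine Finset.sum_congr rfl fun i _ => ?_
    rw [Finset.sum_div, Finset.sum_div, ← Finset.sum_add_distrib]
    refine Finset.sum_congr rfl fun j _ => ?_
    ring
  have hrow' : ∑ i, ∑ j ∈ Finset.univ.erase i, ω i j * ‖z i‖ ^ 2 ≤ ∑ i, ‖z i‖ ^ 2 := by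
    refine Finset.sum_le_sum fun i _ => ?_
    rw [← Finset.sum_mul]
    calc (∑ j ∈ Finset.univ.erase i, ω i j) * ‖z i‖ ^ 2
        ≤ 1 * ‖z i‖ ^ 2 := mul_le_mul_of_nonneg_right (hrow i) (sq_nonneg _)
      _ = ‖z i‖ ^ 2 := one_mul _
  have hswap : ∑ i, ∑ j ∈ Finset.univ.erase i, ω i j * ‖z j‖ ^ 2
      = ∑ j, ∑ i ∈ Finset.univ.erase j, ω i j * ‖z j‖ ^ 2 := by
    refine Finset.sum_comm' ?_
    intro i j
    simp [Finset.mem_erase, eq_comm, and_comm]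
  have hcol' : ∑ i, ∑ j ∈ Finset.univ.erase i, ω i j * ‖z j‖ ^ 2 ≤ ∑ j, ‖z j‖ ^ 2 := by
    rw [hswap]
    refine Finset.sum_le_sum fun j _ => ?_
    rw [← Finset.sum_mul]
    calc (∑ i ∈ Finset.univ.erase j, ω i j) * ‖z j‖ ^ 2
        ≤ 1 * ‖z j‖ ^ 2 := mul_le_mul_of_nonneg_right (hcol j) (sq_nonneg _)
      _ = ‖z j‖ ^ 2 := one_mul _
  linarith
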